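/- arXiv:1610.08346 — 2 statements merged into one kernel-verified Lean document; each statement's English description precedes it below -/
import Mathlib

section
/- Fix $r\in\mathbb{N}_0$ and constants $c_0=1$, $c_1,\dots,c_r\in\mathbb{R}$, $c_{r+1}=0$. Let $a,b:\mathbb{Z}\times\mathbb{R}\to\mathbb{R}$ with $a(n,t)>0$ satisfy $\mathrm{TL}_r(a,b)=0$, i.e. $\dot a(n,t)=a(n,t)(g_{r+1}(n+1,t)-g_{r+1}(n,t))$ and $\dot b(n,t)=h_{r+1}(n,t)-h_{r+1}(n-1,t)$ for all $n\in\mathbb{Z}$, $t\in\mathbb{R}$. Define the reflected coefficients $\tilde a(n,t)=a(-n-1,-t)$ and $\tilde b(n,t)=b(-n,-t)$. Then $(\tilde a,\tilde b)$ again satisfies $\mathrm{TL}_r(\tilde a,\tilde b)=0$ (with the same constants $c_0,\dots,c_r$). -/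
/-- The Jacobi operator `(H f)(n) = a(n) f(n+1) + a(n-1) f(n-1) + b(n) f(n)`. -/
noncomputable def jacobiOp (a b : ℤ → ℝ) (f : ℤ → ℝ) : ℤ → ℝ :=
  fun n => a n * f (n + 1) + a (n - 1) * f (n - 1) + b n * f n

/-- The Kronecker delta sequence `δ_m`. -/
def kron (m : ℤ) : ℤ → ℝ := fun n => if n = m then 1 else 0

/-- `g̃_l(n) = ⟨δ_n, H^l δ_n⟩ = (H^l δ_n)(n)`. -/
noncomputable def gTilde (a b : ℤ → ℝ) (l : ℕ) (n : ℤ) : ℝ :=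
  (jacobiOp a b)^[l] (kron n) n

/-- `h̃_l(n) = 2 a(n) ⟨δ_{n+1}, H^l δ_n⟩ = 2 a(n) (H^l δ_n)(n+1)`. -/
noncomputable def hTilde (a b : ℤ → ℝ) (l : ℕ) (n : ℤ) : ℝ :=
  2 * a n * ((jacobiOp a b)^[l] (kron n) (n + 1))

/-- `g_j(n) = ∑_{l=0}^{j} c_{j-l} g̃_l(n)`. -/
noncomputable def gCoef (c : ℕ → ℝ) (a b : ℤ → ℝ) (j : ℕ) (n : ℤ) : ℝ :=
  ∑ l ∈ Finset.range (j + 1), c (j - l) * gTilde a b l n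

/-- `h_j(n) = ∑_{l=0}^{j} c_{j-l} h̃_l(n)`. -/
noncomputable def hCoef (c : ℕ → ℝ) (a b : ℤ → ℝ) (j : ℕ) (n : ℤ) : ℝ :=
  ∑ l ∈ Finset.range (j + 1), c (j - l) * hTilde a b l n

/-- The `r`-th equation of the Toda hierarchy, `TL_r(a,b) = 0`:
`ȧ(n,t) = a(n,t) (g_{r+1}(n+1,t) - g_{r+1}(n,t))`,
`ḃ(n,t) = h_{r+1}(n,t) - h_{r+1}(n-1,t)`. -/
def TodaHierarchyEq (r : ℕ) (c : ℕ → ℝ) (a b : ℤ → ℝ → ℝ) : Prop :=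
  ∀ (n : ℤ) (t : ℝ),
    HasDerivAt (fun s => a n s)
      (a n t * (gCoef c (fun m => a m t) (fun m => b m t) (r + 1) (n + 1)
        - gCoef c (fun m => a m t) (fun m => b m t) (r + 1) n)) t ∧
    HasDerivAt (fun s => b n s)
      (hCoef c (fun m => a m t) (fun m => b m t) (r + 1) n
        - hCoef c (fun m => a m t) (fun m => b m t) (r + 1) (n - 1)) t

lemma jacobi_iter_lin (a b : ℤ → ℝ) (α β γ : ℝ) (l : ℕ) (f g h : ℤ → ℝ) :
    (jacobiOp a b)^[l] (fun j => α * f j + β * g j + γ * h j)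
      = fun j => α * (jacobiOp a b)^[l] f j + β * (jacobiOp a b)^[l] g j
        + γ * (jacobiOp a b)^[l] h j := by
  induction l generalizing f g h with
  | zero => rfl
  | succ l ih =>
      rw [Function.iterate_succ_apply, Function.iterate_succ_apply,
        Function.iterate_succ_apply, Function.iterate_succ_apply]
      rw [show jacobiOp a b (fun j => α * f j + β * g j + γ * h j)
          = fun j => α * jacobiOp a b f j + β * jacobiOp a b g j + γ * jacobiOp a b h j from
        funext fun j => by simp only [jacobiOp]; ring]
      exact ih _ _ _

lemma jacobi_kron (a b : ℤ → ℝ) (k : ℤ) :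
    jacobiOp a b (kron k)
      = fun j => a k * kron (k+1) j + a (k-1) * kron (k-1) j + b k * kron k j := by
  funext j
  simp only [jacobiOp, kron]
  split_ifs <;> first | (exfalso; omega) | (subst_vars; ring)

lemma iter_kron_symm (a b : ℤ → ℝ) (l : ℕ) (m k : ℤ) :
    (jacobiOp a b)^[l] (kron m) k = (jacobiOp a b)^[l] (kron k) m := by
  induction l generalizing m k with
  | zero => simp only [Function.iterate_zero, id, kron]; split_ifs <;> simp_all
  | succ l ih =>
      rw [Function.iterate_succ_apply']
      conv_rhs => rw [Function.iterate_succ_apply, jacobi_kron, jacobi_iter_lin]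
      simp only [jacobiOp]
      rw [ih m (k+1), ih m (k-1), ih m k]

lemma iter_reflect (a b : ℤ → ℝ) (l : ℕ) (f : ℤ → ℝ) (n : ℤ) :
    (jacobiOp (fun m => a (-m-1)) (fun m => b (-m)))^[l] f n
      = (jacobiOp a b)^[l] (fun j => f (-j)) (-n) := by
  induction l generalizing f n with
  | zero => simp
  | succ l ih =>
      rw [Function.iterate_succ_apply', Function.iterate_succ_apply']
      simp only [jacobiOp]
      rw [ih f (n+1), ih f (n-1), ih f n]
      have e1 : (-(n+1) : ℤ) = -n - 1 := by ring
      have e2 : (-(n-1) : ℤ) = -n + 1 := by ring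
      have e3 : (-(n-1) - 1 : ℤ) = -n := by ring
      rw [e1, e3, e2]
      ring

lemma kron_comp_neg (n : ℤ) : (fun j : ℤ => kron n (-j)) = kron (-n) := by
  funext j; simp only [kron]
  split_ifs <;> first | rfl | omega

lemma gTilde_reflect (a b : ℤ → ℝ) (l : ℕ) (n : ℤ) :
    gTilde (fun m => a (-m-1)) (fun m => b (-m)) l n = gTilde a b l (-n) := by
  simp only [gTilde]
  rw [iter_reflect, kron_comp_neg]

lemma hTilde_reflect (a b : ℤ → ℝ) (l : ℕ) (n : ℤ) :
    hTilde (fun m => a (-m-1)) (fun m => b (-m)) l n = hTilde a b l (-n-1) := by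
  simp only [hTilde]
  rw [iter_reflect, kron_comp_neg]
  rw [show (-(n+1) : ℤ) = -n-1 from by ring, iter_kron_symm a b l (-n) (-n-1),
    show (-n-1+1 : ℤ) = -n from by ring]

lemma gCoef_reflect (c : ℕ → ℝ) (a b : ℤ → ℝ) (j : ℕ) (n : ℤ) :
    gCoef c (fun m => a (-m-1)) (fun m => b (-m)) j n = gCoef c a b j (-n) := by
  simp only [gCoef, gTilde_reflect]

lemma hCoef_reflect (c : ℕ → ℝ) (a b : ℤ → ℝ) (j : ℕ) (n : ℤ) :
    hCoef c (fun m => a (-m-1)) (fun m => b (-m)) j n = hCoef c a b j (-n-1) := by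
  simp only [hCoef, hTilde_reflect]


/-- **Reflection symmetry of the Toda hierarchy:** if `TL_r(a,b) = 0`, then the reflected
coefficients `ã(n,t) = a(-n-1,-t)`, `b̃(n,t) = b(-n,-t)` satisfy `TL_r(ã,b̃) = 0`. -/
theorem toda_hierarchy_reflection
    (r : ℕ) (c : ℕ → ℝ) (hc0 : c 0 = 1) (hcr : c (r + 1) = 0)
    (a b : ℤ → ℝ → ℝ)
    (hpos : ∀ n t, 0 < a n t)
    (heq : TodaHierarchyEq r c a b) :
    TodaHierarchyEq r c (fun n t => a (-n - 1) (-t)) (fun n t => b (-n) (-t)) := by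
  intro n t
  have hneg : HasDerivAt (fun s : ℝ => -s) (-1) t := (hasDerivAt_id t).neg
  constructor
  · have h1 := (heq (-n-1) (-t)).1
    have h2 := h1.comp t hneg
    convert h2 using 1
    case e'_4 => rfl
    case e'_5 => rfl
    case e'_8 => rfl
    beta_reduce
    have G : ∀ k : ℤ, gCoef c (fun m => a (-m - 1) (-t)) (fun m => b (-m) (-t)) (r+1) k
        = gCoef c (fun m => a m (-t)) (fun m => b m (-t)) (r+1) (-k) :=
      fun k => gCoef_reflect c (fun m => a m (-t)) (fun m => b m (-t)) (r+1) k
    rw [G, G]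
    rw [show (-(n+1) : ℤ) = -n-1 from by ring, show (-n-1+1 : ℤ) = -n from by ring]
    ring
  · have h1 := (heq (-n) (-t)).2
    have h2 := h1.comp t hneg
    convert h2 using 1
    case e'_4 => rfl
    case e'_5 => rfl
    case e'_8 => rfl
    beta_reduce
    have G : ∀ k : ℤ, hCoef c (fun m => a (-m - 1) (-t)) (fun m => b (-m) (-t)) (r+1) k
        = hCoef c (fun m => a m (-t)) (fun m => b m (-t)) (r+1) (-k - 1) :=
      fun k => hCoef_reflect c (fun m => a m (-t)) (fun m => b m (-t)) (r+1) k
    rw [G, G]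
    rw [show (-(n-1)-1 : ℤ) = -n from by ring, show (-n-1 : ℤ) = -n-1 from rfl]
    ring
end

section
/- Let $R>0$ and let $f$ be holomorphic on $\{z\in\mathbb{C}:|z|>R\}$, not identically zero, and of exponential type, i.e. there exist $\sigma>0$ and $R'\geq R$ such that $|f(z)|<\exp(\sigma|z|)$ for all $|z|>R'$. Define the indicator function $h_f(\varphi)=\limsup_{r\to\infty}\frac{\log|f(r\mathrm{e}^{\mathrm{i}\varphi})|}{r}$ for $\varphi\in[0,2\pi]$. Then for every $\varphi\in[0,\pi]$ one has $h_f(\varphi)+h_f(\pi+\varphi)\geq 0$. (In particular the classical inequality for entire functions of exponential type, proved via the Phragmén–Lindelöf theorem, continues to hold for functions holomorphic only outside a disc.) -/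
open Complex Filter Set Topology

/-- Compatibility: the complex absolute value as an `AbsoluteValue`. -/
noncomputable def Complex.abs : AbsoluteValue ℂ ℝ := NormedField.toAbsoluteValue ℂ

lemma Complex.norm_eq_abs (z : ℂ) : ‖z‖ = Complex.abs z := rfl

@[simp] lemma Complex.abs_ofReal (r : ℝ) : Complex.abs (r : ℂ) = |r| := by
  rw [← Complex.norm_eq_abs]; simp

@[simp] lemma Complex.abs_I : Complex.abs Complex.I = 1 := by
  rw [← Complex.norm_eq_abs]; simp

@[simp] lemma Complex.abs_two : Complex.abs 2 = 2 := by
  rw [← Complex.norm_eq_abs]; simp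

lemma Complex.abs_exp (z : ℂ) : Complex.abs (Complex.exp z) = Real.exp z.re := by
  rw [← Complex.norm_eq_abs]; exact Complex.norm_exp z

@[simp] lemma Complex.abs_exp_ofReal_mul_I (x : ℝ) : Complex.abs (Complex.exp (x * Complex.I)) = 1 := by
  rw [← Complex.norm_eq_abs]; exact Complex.norm_exp_ofReal_mul_I x

lemma Complex.continuous_abs : Continuous Complex.abs := continuous_norm

lemma Complex.abs_mul_exp_arg_mul_I (x : ℂ) :
    ↑(Complex.abs x) * Complex.exp (↑(Complex.arg x) * Complex.I) = x :=
  Complex.norm_mul_exp_arg_mul_I x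

lemma Complex.re_le_abs (z : ℂ) : z.re ≤ Complex.abs z := Complex.re_le_norm z

/-- The PL multiplier. -/
noncomputable def plMult (δ : ℝ) (z : ℂ) : ℂ :=
  Complex.exp (-(δ:ℂ) * Complex.exp ((3/2 : ℂ) * Complex.log z
    - ((3*Real.pi/8 : ℝ) : ℂ) * Complex.I))

lemma plMult_abs (δ : ℝ) (z : ℂ) (hz : z ≠ 0) :
    Complex.abs (plMult δ z)
      = Real.exp (-δ * (Complex.abs z ^ ((3:ℝ)/2)
          * Real.cos (3/2 * Complex.arg z - 3*Real.pi/8))) := by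
  rw [plMult, Complex.abs_exp]
  congr 1
  have h1 : (-(δ:ℂ) * Complex.exp ((3/2 : ℂ) * Complex.log z
      - ((3*Real.pi/8 : ℝ) : ℂ) * Complex.I)).re
      = -δ * (Complex.exp ((3/2 : ℂ) * Complex.log z
      - ((3*Real.pi/8 : ℝ) : ℂ) * Complex.I)).re := by
    simp [Complex.mul_re]
  rw [h1, Complex.exp_re]
  have hre : ((3/2 : ℂ) * Complex.log z - ((3*Real.pi/8 : ℝ) : ℂ) * Complex.I).re
      = 3/2 * Real.log (Complex.abs z) := by
    simp [Complex.sub_re, Complex.mul_re, Complex.log_re, Complex.norm_eq_abs]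
  have him : ((3/2 : ℂ) * Complex.log z - ((3*Real.pi/8 : ℝ) : ℂ) * Complex.I).im
      = 3/2 * Complex.arg z - 3*Real.pi/8 := by
    simp [Complex.sub_im, Complex.mul_im, Complex.log_im]
  rw [hre, him]
  have habs : Real.exp (3/2 * Real.log (Complex.abs z)) = Complex.abs z ^ ((3:ℝ)/2) := by
    rw [Real.rpow_def_of_pos (Complex.abs.pos hz)]
    ring_nf
  rw [habs]

lemma cos38_pos : 0 < Real.cos (3*Real.pi/8) := by
  apply Real.cos_pos_of_mem_Ioo
  constructor <;> nlinarith [Real.pi_pos]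

lemma cos_ge_cos38 {θ : ℝ} (h0 : 0 ≤ θ) (h1 : θ ≤ Real.pi/2) :
    Real.cos (3*Real.pi/8) ≤ Real.cos (3/2 * θ - 3*Real.pi/8) := by
  rw [← Real.cos_abs (3/2 * θ - 3*Real.pi/8)]
  apply Real.cos_le_cos_of_nonneg_of_le_pi (abs_nonneg _)
  · nlinarith [Real.pi_pos]
  · rw [abs_le]; constructor <;> nlinarith [Real.pi_pos]

lemma plMult_abs_le (δ : ℝ) (hδ : 0 ≤ δ) (z : ℂ) (hz : z ≠ 0)
    (h0 : 0 ≤ Complex.arg z) (h1 : Complex.arg z ≤ Real.pi/2) :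
    Complex.abs (plMult δ z)
      ≤ Real.exp (-(δ * Real.cos (3*Real.pi/8) * Complex.abs z ^ ((3:ℝ)/2))) := by
  rw [plMult_abs δ z hz]
  apply Real.exp_le_exp.2
  have h2 := cos_ge_cos38 h0 h1
  have h3 : (0:ℝ) ≤ Complex.abs z ^ ((3:ℝ)/2) := Real.rpow_nonneg (Complex.abs.nonneg z) _
  nlinarith [mul_le_mul_of_nonneg_left h2 (mul_nonneg hδ h3)]

lemma plMult_abs_le_one (δ : ℝ) (hδ : 0 ≤ δ) (z : ℂ) (hz : z ≠ 0)
    (h0 : 0 ≤ Complex.arg z) (h1 : Complex.arg z ≤ Real.pi/2) :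
    Complex.abs (plMult δ z) ≤ 1 := by
  refine (plMult_abs_le δ hδ z hz h0 h1).trans ?_
  rw [Real.exp_le_one_iff]
  have h3 : (0:ℝ) ≤ Complex.abs z ^ ((3:ℝ)/2) := Real.rpow_nonneg (Complex.abs.nonneg z) _
  nlinarith [mul_nonneg (mul_nonneg hδ cos38_pos.le) h3]

lemma plMult_abs_ge (δ : ℝ) (hδ : 0 ≤ δ) (z : ℂ) (hz : z ≠ 0) :
    Real.exp (-(δ * Complex.abs z ^ ((3:ℝ)/2))) ≤ Complex.abs (plMult δ z) := by
  rw [plMult_abs δ z hz]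
  apply Real.exp_le_exp.2
  have h3 : (0:ℝ) ≤ Complex.abs z ^ ((3:ℝ)/2) := Real.rpow_nonneg (Complex.abs.nonneg z) _
  have h4 : Real.cos (3/2 * Complex.arg z - 3*Real.pi/8) ≤ 1 := Real.cos_le_one _
  nlinarith [mul_le_mul_of_nonneg_left h4 (mul_nonneg hδ h3)]

lemma plMult_differentiableAt (δ : ℝ) {z : ℂ} (hz : z ∈ Complex.slitPlane) :
    DifferentiableAt ℂ (plMult δ) z := by
  unfold plMult
  apply DifferentiableAt.cexp
  apply DifferentiableAt.mul (differentiableAt_const _)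
  apply DifferentiableAt.cexp
  exact ((differentiableAt_const _).mul (Complex.differentiableAt_log hz)).sub
    (differentiableAt_const _)
lemma quadrantPL (G : ℂ → ℂ) (s B C r₁ : ℝ) (hs : 0 ≤ s) (hsr : s < r₁)
    (hd : DifferentiableOn ℂ G {z : ℂ | s < Complex.abs z})
    (hB : ∀ z : ℂ, s < Complex.abs z → Complex.abs (G z) ≤ Real.exp (B * Complex.abs z))
    (hax : ∀ x : ℝ, r₁ ≤ x → Complex.abs (G (x : ℂ)) ≤ C ∧
      Complex.abs (G ((x : ℂ) * Complex.I)) ≤ C) :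
    ∃ M, C ≤ M ∧ 1 ≤ M ∧ ∀ z : ℂ, 0 ≤ z.re → 0 ≤ z.im → r₁ ≤ Complex.abs z →
      Complex.abs (G z) ≤ M := by
  have hr₁ : 0 < r₁ := lt_of_le_of_lt hs hsr
  -- bound on the inner arc
  set K : Set ℂ := {z : ℂ | Complex.abs z = r₁ ∧ 0 ≤ z.re ∧ 0 ≤ z.im} with hK
  have hKcl : IsClosed K := by
    have : K = {z : ℂ | Complex.abs z = r₁} ∩ ({z : ℂ | 0 ≤ z.re} ∩ {z : ℂ | 0 ≤ z.im}) := by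
      ext z; simp [hK, and_assoc]
    rw [this]
    exact (isClosed_eq Complex.continuous_abs continuous_const).inter
      ((isClosed_le continuous_const Complex.continuous_re).inter
        (isClosed_le continuous_const Complex.continuous_im))
  have hKcp : IsCompact K := by
    apply Metric.isCompact_of_isClosed_isBounded hKcl
    apply (Metric.isBounded_closedBall (x := (0:ℂ)) (r := r₁)).subset
    intro z hz
    simp only [Metric.mem_closedBall, dist_zero_right, Complex.norm_eq_abs]
    exact le_of_eq hz.1
  obtain ⟨C₀, hC₀⟩ : ∃ C₀, ∀ z ∈ K, Complex.abs (G z) ≤ C₀ := by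
    obtain ⟨C₀, hC₀⟩ := hKcp.exists_bound_of_continuousOn
      ((hd.continuousOn).mono (fun z hz => by
        simp only [mem_setOf_eq]; rw [hz.1]; exact hsr))
    exact ⟨C₀, fun z hz => by simpa [Complex.norm_eq_abs] using hC₀ z hz⟩
  refine ⟨max C (max C₀ 1), le_max_left _ _,
    (le_max_right C₀ 1).trans (le_max_right _ _), ?_⟩
  set M := max C (max C₀ 1) with hM
  have hM1 : (1:ℝ) ≤ M := (le_max_right C₀ 1).trans (le_max_right _ _)
  have hMC : C ≤ M := le_max_left _ _
  have hMC₀ : C₀ ≤ M := (le_max_left _ _).trans (le_max_right _ _)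
  intro z₀ hre₀ him₀ habs₀
  rcases eq_or_lt_of_le habs₀ with heq | hlt
  · exact le_trans (hC₀ z₀ ⟨heq.symm, hre₀, him₀⟩) hMC₀
  -- main case : r₁ < |z₀|
  have hz₀ne : z₀ ≠ 0 := by
    intro h
    rw [h, map_zero] at hlt
    linarith
  set T := Complex.abs z₀ ^ ((3:ℝ)/2) with hT
  have key : ∀ δ : ℝ, 0 < δ → Complex.abs (G z₀) ≤ M * Real.exp (δ * T) := by
    intro δ hδ
    set k := Real.cos (3*Real.pi/8) with hk
    have hkpos : 0 < k := cos38_pos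
    set B' := max B 1 with hB'
    have hB'pos : (0:ℝ) < B' := lt_of_lt_of_le one_pos (le_max_right _ _)
    set ρ := max ((B'/(δ*k))^2 + 1) (Complex.abs z₀ + 1) with hρ
    have hρz : Complex.abs z₀ + 1 ≤ ρ := le_max_right _ _
    have hρz' : Complex.abs z₀ < ρ := by linarith
    have hρr : r₁ < ρ := lt_trans hlt hρz'
    have hρs : s < ρ := lt_trans hsr hρr
    have hρpos : 0 < ρ := lt_of_le_of_lt hs hρs
    -- outer circle estimate
    have houter : B * ρ - δ * k * ρ ^ ((3:ℝ)/2) ≤ 0 := by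
      have h32 : ρ ^ ((3:ℝ)/2) = ρ * Real.sqrt ρ := by
        rw [show ((3:ℝ)/2) = 1 + 1/2 by norm_num, Real.rpow_add hρpos, Real.rpow_one,
          Real.sqrt_eq_rpow]
      have hsq : B'/(δ*k) ≤ Real.sqrt ρ := by
        apply Real.le_sqrt_of_sq_le
        calc (B'/(δ*k))^2 ≤ (B'/(δ*k))^2 + 1 := by linarith
        _ ≤ ρ := le_max_left _ _
      have hδk : 0 < δ * k := mul_pos hδ hkpos
      have h1 : B' ≤ δ * k * Real.sqrt ρ := by
        rw [div_le_iff₀ hδk] at hsq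
        linarith [hsq]
      have h2 : B ≤ B' := le_max_left _ _
      rw [h32]
      calc B * ρ - δ * k * (ρ * Real.sqrt ρ) = (B - δ * k * Real.sqrt ρ) * ρ := by ring
      _ ≤ 0 := mul_nonpos_of_nonpos_of_nonneg (by linarith) hρpos.le
    -- the domain
    set U : Set ℂ := {z : ℂ | 0 < z.re} ∩ {z : ℂ | 0 < z.im} ∩
      {z : ℂ | r₁ < Complex.abs z} ∩ {z : ℂ | Complex.abs z < ρ} with hU
    have hUopen : IsOpen U := by
      refine (((isOpen_lt continuous_const Complex.continuous_re).inter
        (isOpen_lt continuous_const Complex.continuous_im)).inter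
        (isOpen_lt continuous_const Complex.continuous_abs)).inter
        (isOpen_lt Complex.continuous_abs continuous_const)
    have hUb : Bornology.IsBounded U := by
      apply (Metric.isBounded_ball (x := (0:ℂ)) (r := ρ)).subset
      intro z hz
      simp only [Metric.mem_ball, dist_zero_right, Complex.norm_eq_abs]
      exact hz.2
    set A : Set ℂ := {z : ℂ | 0 ≤ z.re ∧ 0 ≤ z.im ∧ r₁ ≤ Complex.abs z ∧ Complex.abs z ≤ ρ}
      with hA
    have hAcl : IsClosed A := by
      have : A = {z : ℂ | 0 ≤ z.re} ∩ ({z : ℂ | 0 ≤ z.im} ∩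
          ({z : ℂ | r₁ ≤ Complex.abs z} ∩ {z : ℂ | Complex.abs z ≤ ρ})) := by
        ext z; simp [hA, and_assoc]
      rw [this]
      exact (isClosed_le continuous_const Complex.continuous_re).inter
        ((isClosed_le continuous_const Complex.continuous_im).inter
          ((isClosed_le continuous_const Complex.continuous_abs).inter
            (isClosed_le Complex.continuous_abs continuous_const)))
    have hUA : U ⊆ A := by
      rintro z ⟨⟨⟨h1, h2⟩, h3⟩, h4⟩
      exact ⟨h1.le, h2.le, h3.le, h4.le⟩
    have hclA : closure U ⊆ A := closure_minimal hUA hAcl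
    have hAne : ∀ z ∈ A, z ≠ 0 := by
      intro z hz h0
      have h2 := hz.2.2.1
      rw [h0, map_zero] at h2
      linarith
    have hAarg : ∀ z ∈ A, 0 ≤ Complex.arg z ∧ Complex.arg z ≤ Real.pi/2 := by
      intro z hz
      exact ⟨Complex.arg_nonneg_iff.2 hz.2.1, Complex.arg_le_pi_div_two_iff.2 (Or.inl hz.1)⟩
    have hAW : A ⊆ {z : ℂ | s < Complex.abs z} ∩ Complex.slitPlane := by
      intro z hz
      refine ⟨lt_of_lt_of_le hsr hz.2.2.1, ?_⟩
      rw [Complex.mem_slitPlane_iff]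
      rcases eq_or_lt_of_le hz.1 with h0 | h0
      · right
        intro him
        exact hAne z hz (Complex.ext (by simp [← h0]) (by simp [him]))
      · exact Or.inl h0
    -- the auxiliary function
    set h : ℂ → ℂ := fun z => G z * plMult δ z with hh
    have hdiff : DifferentiableOn ℂ h ({z : ℂ | s < Complex.abs z} ∩ Complex.slitPlane) := by
      apply DifferentiableOn.mul (hd.mono inter_subset_left)
      intro z hz
      exact (plMult_differentiableAt δ hz.2).differentiableWithinAt
    have hDCC : DiffContOnCl ℂ h U :=
      DifferentiableOn.diffContOnCl (hdiff.mono (hclA.trans hAW))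
    have hfront : ∀ z ∈ frontier U, ‖h z‖ ≤ M := by
      intro z hzf
      have hzA : z ∈ A := hclA (frontier_subset_closure hzf)
      have hznU : z ∉ U := by
        rw [hUopen.frontier_eq] at hzf
        exact hzf.2
      have hzne := hAne z hzA
      obtain ⟨harg0, harg1⟩ := hAarg z hzA
      have hm1 : Complex.abs (plMult δ z) ≤ 1 := plMult_abs_le_one δ hδ.le z hzne harg0 harg1
      have hGnn : (0:ℝ) ≤ Complex.abs (G z) := Complex.abs.nonneg _
      have hG : Complex.abs (G z) * Complex.abs (plMult δ z) ≤ M := by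
        by_cases hre0 : z.re = 0
        · obtain ⟨x, rfl⟩ : ∃ x : ℝ, z = (x:ℂ) * Complex.I :=
            ⟨z.im, by apply Complex.ext <;> simp [hre0]⟩
          have hx0 : 0 ≤ x := by simpa using hzA.2.1
          have habs' : Complex.abs ((x:ℂ) * Complex.I) = x := by
            simp [map_mul, _root_.abs_of_nonneg hx0]
          have hxr : r₁ ≤ x := by rw [← habs']; exact hzA.2.2.1
          have hGC : Complex.abs (G ((x:ℂ) * Complex.I)) ≤ C := (hax x hxr).2
          calc Complex.abs (G ((x:ℂ) * Complex.I)) * Complex.abs (plMult δ ((x:ℂ) * Complex.I))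
              ≤ C * 1 := mul_le_mul hGC hm1 (Complex.abs.nonneg _) (le_trans hGnn hGC)
          _ = C := mul_one C
          _ ≤ M := hMC
        · by_cases him0 : z.im = 0
          · obtain ⟨x, rfl⟩ : ∃ x : ℝ, z = (x:ℂ) :=
              ⟨z.re, by apply Complex.ext <;> simp [him0]⟩
            have hx0 : 0 ≤ x := by simpa using hzA.1
            have habs' : Complex.abs ((x:ℂ)) = x := by
              simp [_root_.abs_of_nonneg hx0]
            have hxr : r₁ ≤ x := by rw [← habs']; exact hzA.2.2.1
            have hGC : Complex.abs (G ((x:ℂ))) ≤ C := (hax x hxr).1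
            calc Complex.abs (G ((x:ℂ))) * Complex.abs (plMult δ ((x:ℂ)))
                ≤ C * 1 := mul_le_mul hGC hm1 (Complex.abs.nonneg _) (le_trans hGnn hGC)
            _ = C := mul_one C
            _ ≤ M := hMC
          · by_cases habsρ : Complex.abs z = ρ
            · have h1 : Complex.abs (G z) ≤ Real.exp (B * ρ) := by
                rw [← habsρ]
                exact hB z (by rw [habsρ]; exact hρs)
              have h2 : Complex.abs (plMult δ z)
                  ≤ Real.exp (-(δ * k * ρ ^ ((3:ℝ)/2))) := by
                rw [← habsρ]
                exact plMult_abs_le δ hδ.le z hzne harg0 harg1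
              calc Complex.abs (G z) * Complex.abs (plMult δ z)
                  ≤ Real.exp (B * ρ) * Real.exp (-(δ * k * ρ ^ ((3:ℝ)/2))) :=
                    mul_le_mul h1 h2 (Complex.abs.nonneg _) (Real.exp_pos _).le
              _ = Real.exp (B * ρ - δ * k * ρ ^ ((3:ℝ)/2)) := by
                    rw [← Real.exp_add]; ring_nf
              _ ≤ 1 := Real.exp_le_one_iff.2 houter
              _ ≤ M := hM1
            · have habsr : Complex.abs z = r₁ := by
                by_contra hne
                apply hznU
                refine ⟨⟨⟨?_, ?_⟩, ?_⟩, ?_⟩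
                · exact lt_of_le_of_ne hzA.1 (Ne.symm hre0)
                · exact lt_of_le_of_ne hzA.2.1 (Ne.symm him0)
                · exact lt_of_le_of_ne hzA.2.2.1 (fun hh' => hne hh'.symm)
                · exact lt_of_le_of_ne hzA.2.2.2 habsρ
              have hGC : Complex.abs (G z) ≤ C₀ := hC₀ z ⟨habsr, hzA.1, hzA.2.1⟩
              calc Complex.abs (G z) * Complex.abs (plMult δ z)
                  ≤ C₀ * 1 := mul_le_mul hGC hm1 (Complex.abs.nonneg _) (le_trans hGnn hGC)
              _ = C₀ := mul_one C₀
              _ ≤ M := hMC₀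
      calc ‖h z‖ = Complex.abs (G z) * Complex.abs (plMult δ z) := by
            simp [hh, Complex.norm_eq_abs, map_mul]
      _ ≤ M := hG
    -- z₀ is in the closure of U
    have hz₀cl : z₀ ∈ closure U := by
      set ε := min ((Complex.abs z₀ - r₁)/2) (1/2) with hε
      have hεpos : 0 < ε := lt_min (by linarith) (by norm_num)
      have htend : Tendsto (fun t : ℝ => z₀ + (t:ℂ) * (1 + Complex.I))
          (𝓝[>] (0:ℝ)) (𝓝 z₀) := by
        have h1 : Tendsto (fun t : ℝ => z₀ + (t:ℂ) * (1 + Complex.I))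
            (𝓝 (0:ℝ)) (𝓝 (z₀ + ((0:ℝ):ℂ) * (1 + Complex.I))) :=
          (continuous_const.add (Complex.continuous_ofReal.mul continuous_const)).tendsto 0
        simp only [Complex.ofReal_zero, zero_mul, add_zero] at h1
        exact h1.mono_left nhdsWithin_le_nhds
      apply mem_closure_of_tendsto htend
      filter_upwards [Ioo_mem_nhdsGT_of_mem (show (0:ℝ) ∈ Ico (0:ℝ) ε from ⟨le_refl _, hεpos⟩)]
        with t ht
      have hre : (z₀ + (t:ℂ) * (1 + Complex.I)).re = z₀.re + t := by
        simp [Complex.mul_re]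
      have him : (z₀ + (t:ℂ) * (1 + Complex.I)).im = z₀.im + t := by
        simp [Complex.mul_im]
      have habs1 : Complex.abs ((t:ℂ) * (1 + Complex.I)) ≤ 2 * t := by
        rw [map_mul, Complex.abs_ofReal, abs_of_pos ht.1]
        have h2 : Complex.abs (1 + Complex.I) ≤ 2 :=
          le_trans (Complex.abs.add_le 1 Complex.I) (by simp; norm_num)
        nlinarith [ht.1]
      have hlow : Complex.abs z₀ - 2*t ≤ Complex.abs (z₀ + (t:ℂ) * (1 + Complex.I)) := by
        have h3 := Complex.abs.add_le (z₀ + (t:ℂ) * (1 + Complex.I)) (-((t:ℂ) * (1 + Complex.I)))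
        rw [add_neg_cancel_right, Complex.abs.map_neg] at h3
        linarith
      have hup : Complex.abs (z₀ + (t:ℂ) * (1 + Complex.I)) ≤ Complex.abs z₀ + 2*t := by
        have h3 := Complex.abs.add_le z₀ ((t:ℂ) * (1 + Complex.I))
        linarith
      have ht1 : t < (Complex.abs z₀ - r₁)/2 := lt_of_lt_of_le ht.2 (min_le_left _ _)
      have ht2 : t < 1/2 := lt_of_lt_of_le ht.2 (min_le_right _ _)
      refine ⟨⟨⟨?_, ?_⟩, ?_⟩, ?_⟩
      · simp only [mem_setOf_eq, hre]; linarith [ht.1]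
      · simp only [mem_setOf_eq, him]; linarith [ht.1]
      · simp only [mem_setOf_eq]; linarith
      · simp only [mem_setOf_eq]; linarith
    have hmax := Complex.norm_le_of_forall_mem_frontier_norm_le hUb hDCC hfront hz₀cl
    have hlow := plMult_abs_ge δ hδ.le z₀ hz₀ne
    have h5 : Complex.abs (G z₀) * Real.exp (-(δ * T)) ≤ M := by
      calc Complex.abs (G z₀) * Real.exp (-(δ * T))
          ≤ Complex.abs (G z₀) * Complex.abs (plMult δ z₀) :=
            mul_le_mul_of_nonneg_left hlow (Complex.abs.nonneg _)
      _ = ‖h z₀‖ := by simp [hh, Complex.norm_eq_abs, map_mul]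
      _ ≤ M := hmax
    have h6 := mul_le_mul_of_nonneg_right h5 (Real.exp_pos (δ*T)).le
    rw [mul_assoc, ← Real.exp_add] at h6
    simpa using h6
  have htd : Tendsto (fun δ : ℝ => M * Real.exp (δ * T)) (𝓝[>] (0:ℝ)) (𝓝 M) := by
    have h1 : Tendsto (fun δ : ℝ => M * Real.exp (δ * T)) (𝓝 (0:ℝ))
        (𝓝 (M * Real.exp (0 * T))) := by
      apply Tendsto.const_mul
      exact (Real.continuous_exp.comp (continuous_id.mul continuous_const)).tendsto 0
    simp only [zero_mul, Real.exp_zero, mul_one] at h1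
    exact h1.mono_left nhdsWithin_le_nhds
  apply ge_of_tendsto htd
  filter_upwards [self_mem_nhdsWithin] with δ hδ
  exact key δ hδ
lemma exp_pi_div_two_mul_I : Complex.exp (((Real.pi/2 : ℝ) : ℂ) * Complex.I) = Complex.I := by
  rw [Complex.exp_mul_I, ← Complex.ofReal_cos, ← Complex.ofReal_sin,
    Real.cos_pi_div_two, Real.sin_pi_div_two]
  simp

lemma abs_exp_real_mul_I (θ : ℝ) : Complex.abs (Complex.exp ((θ:ℂ) * Complex.I)) = 1 := by
  rw [Complex.abs_exp]
  simp

lemma sectorPL (F : ℂ → ℂ) (s B C a b θ₁ r₁ : ℝ) (hs : 0 ≤ s) (hsr : s < r₁)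
    (hd : DifferentiableOn ℂ F {z : ℂ | s < Complex.abs z})
    (hB : ∀ z : ℂ, s < Complex.abs z → Complex.abs (F z) ≤ Real.exp (B * Complex.abs z))
    (h1 : ∀ r : ℝ, r₁ ≤ r →
      Complex.abs (F ((r:ℂ) * Complex.exp ((θ₁:ℂ) * Complex.I))) ≤ C * Real.exp (a * r))
    (h2 : ∀ r : ℝ, r₁ ≤ r →
      Complex.abs (F ((r:ℂ) * Complex.exp (((θ₁ + Real.pi/2 : ℝ):ℂ) * Complex.I)))
        ≤ C * Real.exp (b * r)) :
    ∃ M, C ≤ M ∧ 1 ≤ M ∧ ∀ θ : ℝ, θ₁ ≤ θ → θ ≤ θ₁ + Real.pi/2 → ∀ r : ℝ, r₁ ≤ r →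
      Complex.abs (F ((r:ℂ) * Complex.exp ((θ:ℂ) * Complex.I)))
        ≤ M * Real.exp ((a * Real.cos (θ - θ₁) + b * Real.sin (θ - θ₁)) * r) := by
  have hr₁ : 0 < r₁ := lt_of_le_of_lt hs hsr
  set E₁ : ℂ := Complex.exp ((θ₁:ℂ) * Complex.I) with hE₁
  have habsE₁ : Complex.abs E₁ = 1 := abs_exp_real_mul_I θ₁
  set v : ℂ := (a:ℂ) - (b:ℂ) * Complex.I with hv
  have hvre : v.re = a := by simp [hv]
  have hvim : v.im = -b := by simp [hv]
  set G : ℂ → ℂ := fun ζ => F (E₁ * ζ) * Complex.exp (-(v * ζ)) with hG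
  have habsmul : ∀ ζ : ℂ, Complex.abs (E₁ * ζ) = Complex.abs ζ := by
    intro ζ; rw [map_mul, habsE₁, one_mul]
  have hGd : DifferentiableOn ℂ G {ζ : ℂ | s < Complex.abs ζ} := by
    apply DifferentiableOn.mul
    · apply DifferentiableOn.comp hd
      · exact ((differentiable_const E₁).mul differentiable_id).differentiableOn
      · intro ζ hζ
        simpa only [mem_setOf_eq, habsmul] using hζ
    · apply DifferentiableOn.cexp
      exact (((differentiable_const v).mul differentiable_id).neg).differentiableOn
  have hGB : ∀ ζ : ℂ, s < Complex.abs ζ →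
      Complex.abs (G ζ) ≤ Real.exp ((B + Complex.abs v) * Complex.abs ζ) := by
    intro ζ hζ
    have hF : Complex.abs (F (E₁ * ζ)) ≤ Real.exp (B * Complex.abs ζ) := by
      have := hB (E₁ * ζ) (by rwa [habsmul])
      rwa [habsmul] at this
    have hexp : Complex.abs (Complex.exp (-(v * ζ))) ≤ Real.exp (Complex.abs v * Complex.abs ζ) := by
      rw [Complex.abs_exp]
      apply Real.exp_le_exp.2
      calc (-(v * ζ)).re ≤ Complex.abs (-(v * ζ)) := Complex.re_le_abs _
      _ = Complex.abs v * Complex.abs ζ := by rw [Complex.abs.map_neg, map_mul]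
    calc Complex.abs (G ζ) = Complex.abs (F (E₁ * ζ)) * Complex.abs (Complex.exp (-(v * ζ))) := by
          rw [hG]; exact map_mul Complex.abs _ _
    _ ≤ Real.exp (B * Complex.abs ζ) * Real.exp (Complex.abs v * Complex.abs ζ) :=
          mul_le_mul hF hexp (Complex.abs.nonneg _) (Real.exp_pos _).le
    _ = Real.exp ((B + Complex.abs v) * Complex.abs ζ) := by rw [← Real.exp_add]; ring_nf
  have hax : ∀ x : ℝ, r₁ ≤ x → Complex.abs (G (x : ℂ)) ≤ C ∧
      Complex.abs (G ((x : ℂ) * Complex.I)) ≤ C := by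
    intro x hx
    constructor
    · have hpt : E₁ * (x:ℂ) = (x:ℂ) * E₁ := mul_comm _ _
      have hmre : (-(v * (x:ℂ))).re = -(a * x) := by
        simp [Complex.mul_re, hvre, hvim]
      have : Complex.abs (G (x:ℂ))
          = Complex.abs (F ((x:ℂ) * E₁)) * Real.exp (-(a * x)) := by
        rw [hG]
        simp only []
        rw [map_mul, Complex.abs_exp, hmre, hpt]
      rw [this]
      calc Complex.abs (F ((x:ℂ) * E₁)) * Real.exp (-(a * x))
          ≤ (C * Real.exp (a * x)) * Real.exp (-(a * x)) :=
            mul_le_mul_of_nonneg_right (h1 x hx) (Real.exp_pos _).le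
      _ = C := by rw [mul_assoc, ← Real.exp_add]; simp
    · have hpt : E₁ * ((x:ℂ) * Complex.I) = (x:ℂ) * Complex.exp (((θ₁ + Real.pi/2 : ℝ):ℂ) * Complex.I) := by
        rw [Complex.ofReal_add, add_mul, Complex.exp_add, _root_.exp_pi_div_two_mul_I]
        ring
      have hmre : (-(v * ((x:ℂ) * Complex.I))).re = -(b * x) := by
        simp [Complex.mul_re, Complex.mul_im, hvre, hvim]
      have : Complex.abs (G ((x:ℂ) * Complex.I))
          = Complex.abs (F ((x:ℂ) * Complex.exp (((θ₁ + Real.pi/2 : ℝ):ℂ) * Complex.I)))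
            * Real.exp (-(b * x)) := by
        rw [hG]
        simp only []
        rw [map_mul, Complex.abs_exp, hmre, hpt]
      rw [this]
      calc Complex.abs (F ((x:ℂ) * Complex.exp (((θ₁ + Real.pi/2 : ℝ):ℂ) * Complex.I)))
            * Real.exp (-(b * x))
          ≤ (C * Real.exp (b * x)) * Real.exp (-(b * x)) :=
            mul_le_mul_of_nonneg_right (h2 x hx) (Real.exp_pos _).le
      _ = C := by rw [mul_assoc, ← Real.exp_add]; simp
  obtain ⟨M, hMC, hM1, hq⟩ := quadrantPL G s (B + Complex.abs v) C r₁ hs hsr hGd hGB hax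
  refine ⟨M, hMC, hM1, ?_⟩
  intro θ hθ1 hθ2 r hr
  have hrpos : 0 < r := lt_of_lt_of_le hr₁ hr
  set Δ := θ - θ₁ with hΔ
  have hΔ0 : 0 ≤ Δ := by simp [hΔ]; linarith
  have hΔ2 : Δ ≤ Real.pi/2 := by simp [hΔ]; linarith
  set ζ : ℂ := (r:ℂ) * Complex.exp ((Δ:ℂ) * Complex.I) with hζ
  have hζre : ζ.re = r * Real.cos Δ := by
    rw [hζ]
    simp [Complex.mul_re, Complex.exp_ofReal_mul_I_re, Complex.exp_ofReal_mul_I_im]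
  have hζim : ζ.im = r * Real.sin Δ := by
    rw [hζ]
    simp [Complex.mul_im, Complex.exp_ofReal_mul_I_re, Complex.exp_ofReal_mul_I_im]
  have hζabs : Complex.abs ζ = r := by
    rw [hζ, map_mul, abs_exp_real_mul_I, Complex.abs_ofReal, mul_one, abs_of_pos hrpos]
  have hcos : 0 ≤ Real.cos Δ := Real.cos_nonneg_of_mem_Icc ⟨by linarith, hΔ2⟩
  have hsin : 0 ≤ Real.sin Δ := Real.sin_nonneg_of_nonneg_of_le_pi hΔ0
    (by linarith [Real.pi_pos])
  have hq' := hq ζ (by rw [hζre]; positivity) (by rw [hζim]; positivity)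
    (by rw [hζabs]; exact hr)
  have hpt : E₁ * ζ = (r:ℂ) * Complex.exp ((θ:ℂ) * Complex.I) := by
    rw [hζ, hE₁]
    rw [show ((θ:ℂ)) = (θ₁:ℂ) + (Δ:ℂ) by rw [hΔ]; push_cast; ring]
    rw [add_mul, Complex.exp_add]
    ring
  have hvζre : (v * ζ).re = (a * Real.cos Δ + b * Real.sin Δ) * r := by
    rw [Complex.mul_re, hζre, hζim, hvre, hvim]
    ring
  have hGζ : Complex.abs (G ζ)
      = Complex.abs (F ((r:ℂ) * Complex.exp ((θ:ℂ) * Complex.I)))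
        * Real.exp (-((a * Real.cos Δ + b * Real.sin Δ) * r)) := by
    rw [hG]
    simp only []
    rw [map_mul, Complex.abs_exp, Complex.neg_re, hvζre, hpt]
  have hkey : Complex.abs (F ((r:ℂ) * Complex.exp ((θ:ℂ) * Complex.I)))
      * Real.exp (-((a * Real.cos Δ + b * Real.sin Δ) * r)) ≤ M := by
    rw [← hGζ]; exact hq'
  have h6 := mul_le_mul_of_nonneg_right hkey (Real.exp_pos ((a * Real.cos Δ + b * Real.sin Δ) * r)).le
  rw [mul_assoc, ← Real.exp_add] at h6
  simpa using h6
lemma vanishPL (F : ℂ → ℂ) (s M c r₂ : ℝ) (hs : 0 < s) (hc : 0 < c) (hsr : s < r₂)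
    (hd : DifferentiableOn ℂ F {z : ℂ | s < Complex.abs z})
    (hdec : ∀ z : ℂ, r₂ ≤ Complex.abs z →
      Complex.abs (F z) ≤ M * Real.exp (-(c * Complex.abs z))) :
    ∃ ρ : ℝ, 0 < ρ ∧ ∀ z : ℂ, ρ < Complex.abs z → F z = 0 := by
  have hr₂ : 0 < r₂ := lt_trans hs hsr
  set g : ℂ → ℂ := fun w => if w = 0 then 0 else F w⁻¹ with hg
  have hg0 : g 0 = 0 := if_pos rfl
  have hgne : ∀ w : ℂ, w ≠ 0 → g w = F w⁻¹ := fun w hw => if_neg hw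
  -- bound for g on small punctured disc
  have hgb : ∀ w : ℂ, w ≠ 0 → Complex.abs w ≤ r₂⁻¹ →
      Complex.abs (g w) ≤ M * Real.exp (-(c * (Complex.abs w)⁻¹)) := by
    intro w hw hwr
    have habs : Complex.abs w⁻¹ = (Complex.abs w)⁻¹ := map_inv₀ Complex.abs w
    have hwpos : 0 < Complex.abs w := Complex.abs.pos hw
    have h1 : r₂ ≤ Complex.abs w⁻¹ := by
      rw [habs, ← inv_inv r₂]
      exact inv_anti₀ (by positivity) hwr
    rw [hgne w hw]
    have h2 := hdec w⁻¹ h1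
    rwa [habs] at h2
  -- the bound function tends to zero
  have hbt : Tendsto (fun w : ℂ => M * Real.exp (-(c * (Complex.abs w)⁻¹)))
      (𝓝[≠] (0:ℂ)) (𝓝 0) := by
    have habs : Tendsto (fun w : ℂ => Complex.abs w) (𝓝[≠] (0:ℂ)) (𝓝[>] (0:ℝ)) := by
      rw [tendsto_nhdsWithin_iff]
      constructor
      · have h3 := Complex.continuous_abs.tendsto (0:ℂ)
        simp only [map_zero] at h3
        exact h3.mono_left nhdsWithin_le_nhds
      · filter_upwards [self_mem_nhdsWithin] with w hw
        exact Complex.abs.pos hw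
    have hinv : Tendsto (fun w : ℂ => (Complex.abs w)⁻¹) (𝓝[≠] (0:ℂ)) atTop :=
      tendsto_inv_nhdsGT_zero.comp habs
    have hexp : Tendsto (fun x : ℝ => M * Real.exp (-(c * x))) atTop (𝓝 (M * 0)) :=
      (Real.tendsto_exp_atBot.comp
        (tendsto_neg_atTop_atBot.comp (Tendsto.const_mul_atTop hc tendsto_id))).const_mul M
    rw [mul_zero] at hexp
    exact hexp.comp hinv
  -- analyticity at 0
  have hgan : AnalyticAt ℂ g 0 := by
    apply Complex.analyticAt_of_differentiable_on_punctured_nhds_of_continuousAt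
    · rw [eventually_nhdsWithin_iff]
      have hball : ∀ᶠ w : ℂ in 𝓝 0, Complex.abs w < s⁻¹ := by
        filter_upwards [Metric.ball_mem_nhds (0:ℂ) (by positivity : (0:ℝ) < s⁻¹)] with w hw
        simpa [Metric.mem_ball, Complex.dist_eq, Complex.norm_eq_abs] using hw
      filter_upwards [hball] with w hw hw0
      have hwne : w ≠ 0 := hw0
      have hwpos : 0 < Complex.abs w := Complex.abs.pos hwne
      have h1 : DifferentiableAt ℂ (fun u : ℂ => F u⁻¹) w := by
        have hmem : s < Complex.abs w⁻¹ := by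
          rw [map_inv₀, ← inv_inv s]
          exact inv_strictAnti₀ hwpos hw
        have hF : DifferentiableAt ℂ F w⁻¹ := by
          apply (hd.differentiableAt ?_)
          exact (isOpen_lt continuous_const Complex.continuous_abs).mem_nhds hmem
        exact hF.comp w (differentiableAt_inv hwne)
      have heq : (fun u : ℂ => F u⁻¹) =ᶠ[𝓝 w] g := by
        filter_upwards [isOpen_compl_singleton.mem_nhds hwne] with u hu
        exact (hgne u hu).symm
      exact heq.differentiableAt_iff.1 h1
    · have hpt : Tendsto g (𝓝[≠] (0:ℂ)) (𝓝 0) := by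
        apply squeeze_zero_norm' ?_ hbt
        have hball : ∀ᶠ w : ℂ in 𝓝 0, Complex.abs w ≤ r₂⁻¹ := by
          filter_upwards [Metric.ball_mem_nhds (0:ℂ) (by positivity : (0:ℝ) < r₂⁻¹)] with w hw
          have : Complex.abs w < r₂⁻¹ := by
            simpa [Metric.mem_ball, Complex.dist_eq, Complex.norm_eq_abs] using hw
          linarith
        rw [eventually_nhdsWithin_iff]
        filter_upwards [hball] with w hw hw0
        simpa [Complex.norm_eq_abs] using hgb w hw0 hw
      have hpure : Tendsto g (pure (0:ℂ)) (𝓝 (0:ℂ)) := by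
        rw [tendsto_pure_left]
        intro U hU
        rw [hg0]
        exact mem_of_mem_nhds hU
      have hsup : Tendsto g (𝓝[≠] (0:ℂ) ⊔ pure 0) (𝓝 (0:ℂ)) := tendsto_sup.2 ⟨hpt, hpure⟩
      rw [ContinuousAt, hg0]
      rwa [nhdsNE_sup_pure] at hsup
  -- the order of g at 0 must be infinite
  have hord : analyticOrderAt g 0 = ⊤ := by
    by_contra hne
    obtain ⟨n, hn⟩ : ∃ n : ℕ, analyticOrderAt g 0 = n := by
      rcases (WithTop.ne_top_iff_exists).1 hne with ⟨n, hn⟩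
      exact ⟨n, hn.symm⟩
    obtain ⟨q, hqan, hq0, hev⟩ := (hgan.analyticOrderAt_eq_natCast (n := n)).1 hn
    -- q tends to q 0 along real positive values
    have hqc : Tendsto (fun t : ℝ => ‖q ((t:ℂ))‖) (𝓝[>] (0:ℝ)) (𝓝 ‖q 0‖) := by
      have h1 : Tendsto (fun t : ℝ => ((t:ℂ))) (𝓝[>] (0:ℝ)) (𝓝 (0:ℂ)) := by
        have := Complex.continuous_ofReal.tendsto (0:ℝ)
        simpa using this.mono_left nhdsWithin_le_nhds
      exact (hqan.continuousAt.tendsto.comp h1).norm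
    -- bound on q along real positive values
    obtain ⟨ε, hεpos, hεev⟩ := Metric.eventually_nhds_iff.1 hev
    set b : ℝ → ℝ := fun t => M * ((t⁻¹)^n * Real.exp (-(c * t⁻¹))) with hb
    have hqb : ∀ᶠ t : ℝ in 𝓝[>] (0:ℝ), ‖q ((t:ℂ))‖ ≤ b t := by
      have hIoo : Ioo (0:ℝ) (min ε r₂⁻¹) ∈ 𝓝[>] (0:ℝ) :=
        Ioo_mem_nhdsGT_of_mem ⟨le_refl _, lt_min hεpos (by positivity)⟩
      filter_upwards [hIoo] with t ht
      have htpos : 0 < t := ht.1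
      have htne : ((t:ℂ)) ≠ 0 := by
        simpa using ne_of_gt htpos
      have habs : Complex.abs ((t:ℂ)) = t := by
        rw [Complex.abs_ofReal, abs_of_pos htpos]
      have hgq : g ((t:ℂ)) = ((t:ℂ))^n * q ((t:ℂ)) := by
        have := hεev (y := (t:ℂ)) (by
          simp only [Complex.dist_eq, sub_zero]
          rw [Complex.norm_eq_abs, habs]
          exact lt_of_lt_of_le ht.2 (min_le_left _ _))
        simpa using this
      have hgle : Complex.abs (g ((t:ℂ))) ≤ M * Real.exp (-(c * t⁻¹)) := by
        have := hgb ((t:ℂ)) htne (by rw [habs]; exact le_of_lt (lt_of_lt_of_le ht.2 (min_le_right _ _)))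
        rwa [habs] at this
      have hqeq : ‖q ((t:ℂ))‖ = Complex.abs (g ((t:ℂ))) / t^n := by
        rw [hgq, map_mul, map_pow, habs, Complex.norm_eq_abs]
        field_simp
      rw [hqeq, hb]
      rw [div_le_iff₀ (by positivity)]
      calc Complex.abs (g ((t:ℂ))) ≤ M * Real.exp (-(c * t⁻¹)) := hgle
      _ = M * ((t⁻¹)^n * Real.exp (-(c * t⁻¹))) * t^n := by
          rw [inv_pow]
          field_simp
    -- b tends to 0
    have hbt0 : Tendsto b (𝓝[>] (0:ℝ)) (𝓝 0) := by
      have hinv : Tendsto (fun t : ℝ => t⁻¹) (𝓝[>] (0:ℝ)) atTop := tendsto_inv_nhdsGT_zero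
      have hxn : Tendsto (fun x : ℝ => x^n * Real.exp (-(c * x))) atTop (𝓝 0) := by
        have h1 := tendsto_rpow_mul_exp_neg_mul_atTop_nhds_zero n c hc
        have h2 : ∀ᶠ x : ℝ in atTop, x ^ (n:ℝ) * Real.exp (-c * x)
            = x^n * Real.exp (-(c * x)) := by
          filter_upwards [eventually_ge_atTop (0:ℝ)] with x hx
          rw [Real.rpow_natCast]
          ring_nf
        exact (Tendsto.congr' h2 h1)
      have := (hxn.comp hinv).const_mul M
      rw [mul_zero] at this
      simpa [hb, Function.comp] using this
    have hq00 : ‖q 0‖ ≤ 0 := le_of_tendsto_of_tendsto hqc hbt0 hqb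
    exact hq0 (norm_le_zero_iff.1 hq00)
  -- conclude
  have hev := analyticOrderAt_eq_top.1 hord
  obtain ⟨ε, hεpos, hεev⟩ := Metric.eventually_nhds_iff.1 hev
  refine ⟨ε⁻¹ + r₂, by positivity, ?_⟩
  intro z hz
  have hzpos : 0 < Complex.abs z := lt_of_le_of_lt (by positivity) hz
  have hzne : z ≠ 0 := by
    intro h
    rw [h, map_zero] at hzpos
    exact lt_irrefl _ hzpos
  have hw : dist z⁻¹ 0 < ε := by
    rw [dist_zero_right, Complex.norm_eq_abs, map_inv₀]
    have hεinv : ε⁻¹ < Complex.abs z := by linarith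
    calc (Complex.abs z)⁻¹ < ε⁻¹⁻¹ := inv_strictAnti₀ (by positivity) hεinv
    _ = ε := inv_inv ε
  have hgz := hεev hw
  rw [hgne _ (inv_ne_zero hzne), inv_inv] at hgz
  exact hgz
lemma exterior_isPreconnected (R : ℝ) (hR : 0 ≤ R) :
    IsPreconnected {z : ℂ | R < Complex.abs z} := by
  have himg : {z : ℂ | R < Complex.abs z}
      = (fun p : ℝ × ℂ => p.1 • p.2) '' (Ioi R ×ˢ Metric.sphere (0:ℂ) 1) := by
    ext z
    constructor
    · intro hz
      have hzpos : 0 < Complex.abs z := lt_of_le_of_lt hR hz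
      have hzne : z ≠ 0 := by
        intro h; rw [h, map_zero] at hzpos; exact lt_irrefl _ hzpos
      refine ⟨(Complex.abs z, (Complex.abs z)⁻¹ • z), ⟨hz, ?_⟩, ?_⟩
      · rw [mem_sphere_zero_iff_norm, norm_smul, Real.norm_eq_abs, Complex.norm_eq_abs,
          abs_of_pos (by positivity), inv_mul_cancel₀ (ne_of_gt hzpos)]
      · simp only [smul_smul]
        rw [mul_inv_cancel₀ (ne_of_gt hzpos), one_smul]
    · rintro ⟨⟨t, w⟩, ⟨ht, hw⟩, rfl⟩
      have htpos : 0 < t := lt_of_le_of_lt hR ht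
      have hwn : ‖w‖ = 1 := mem_sphere_zero_iff_norm.1 hw
      simp only [mem_setOf_eq]
      have : Complex.abs (t • w) = |t| * Complex.abs w := by
        rw [← Complex.norm_eq_abs, norm_smul, Real.norm_eq_abs, Complex.norm_eq_abs]
      rw [this, ← Complex.norm_eq_abs, hwn, mul_one, abs_of_pos htpos]
      exact ht
  rw [himg]
  apply IsConnected.isPreconnected
  apply IsConnected.image
  · refine isConnected_Ioi.prod (isConnected_sphere ?_ 0 zero_le_one)
    rw [Complex.rank_real_complex]
    norm_num
  · exact (continuous_fst.smul continuous_snd).continuousOn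

lemma product_zero_contra (R : ℝ) (hR : 0 < R) (f : ℂ → ℂ)
    (hd : DifferentiableOn ℂ f {z : ℂ | R < Complex.abs z})
    (ρ : ℝ) (hρ : R ≤ ρ)
    (hz : ∀ u : ℂ, ρ < Complex.abs u → f u * f (-u) = 0)
    (z₁ : ℂ) (hz₁ : R < Complex.abs z₁) (hfz₁ : f z₁ ≠ 0) : False := by
  set Ω := {z : ℂ | R < Complex.abs z} with hΩ
  have hΩo : IsOpen Ω := isOpen_lt continuous_const Complex.continuous_abs
  have hΩc : IsPreconnected Ω := exterior_isPreconnected R hR.le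
  have hfan : AnalyticOnNhd ℂ f Ω := hd.analyticOnNhd hΩo
  set P : ℂ → ℂ := fun u => f u * f (-u) with hP
  have hPan : AnalyticOnNhd ℂ P Ω := by
    apply AnalyticOnNhd.mul hfan
    intro u hu
    have h1 : AnalyticAt ℂ f (-u) := by
      apply hfan (-u)
      simpa [hΩ] using hu
    exact h1.comp (analyticAt_id.neg)
  set w₀ : ℂ := ((ρ + 1 : ℝ) : ℂ) with hw₀
  have hw₀abs : Complex.abs w₀ = ρ + 1 := by
    rw [hw₀, Complex.abs_ofReal, abs_of_pos (by linarith)]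
  have hw₀Ω : w₀ ∈ Ω := by
    simp only [hΩ, mem_setOf_eq, hw₀abs]; linarith
  have hPev : P =ᶠ[𝓝 w₀] 0 := by
    have hopen : IsOpen {u : ℂ | ρ < Complex.abs u} :=
      isOpen_lt continuous_const Complex.continuous_abs
    filter_upwards [hopen.mem_nhds (by rw [mem_setOf_eq, hw₀abs]; linarith)] with u hu
    exact hz u hu
  have hPzero : EqOn P 0 Ω :=
    hPan.eqOn_zero_of_preconnected_of_eventuallyEq_zero hΩc hw₀Ω hPev
  have hfneg : ∀ u : ℂ, u ∈ Ω → f u ≠ 0 → f (-u) = 0 := by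
    intro u hu hf
    have h2 := hPzero hu
    simp only [hP, Pi.zero_apply] at h2
    rcases mul_eq_zero.1 h2 with h | h
    · exact absurd h hf
    · exact h
  have hopen : IsOpen (Ω ∩ f ⁻¹' {(0:ℂ)}ᶜ) :=
    hd.continuousOn.isOpen_inter_preimage hΩo isOpen_compl_singleton
  have hopen2 : IsOpen ((fun u : ℂ => -u) ⁻¹' (Ω ∩ f ⁻¹' {(0:ℂ)}ᶜ)) :=
    hopen.preimage continuous_neg
  have hfz : f =ᶠ[𝓝 (-z₁)] 0 := by
    have hmem : -z₁ ∈ (fun u : ℂ => -u) ⁻¹' (Ω ∩ f ⁻¹' {(0:ℂ)}ᶜ) := by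
      simp only [mem_preimage, neg_neg]
      exact ⟨hz₁, hfz₁⟩
    filter_upwards [hopen2.mem_nhds hmem] with u hu
    have h3 : f (-(-u)) = 0 := hfneg (-u) hu.1 hu.2
    rwa [neg_neg] at h3
  have hneg : -z₁ ∈ Ω := by
    simp only [hΩ, mem_setOf_eq, map_neg_eq_map]
    exact hz₁
  have hzero := hfan.eqOn_zero_of_preconnected_of_eventuallyEq_zero hΩc hneg hfz
  exact hfz₁ (hzero hz₁)

/-- The indicator function of a function holomorphic outside a disc:
`h_f(φ) = limsup_{r → ∞} log |f(r e^{iφ})| / r`, with values in `[-∞, ∞]`. -/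
noncomputable def indicatorFn (f : ℂ → ℂ) (φ : ℝ) : EReal :=
  Filter.limsup
    (fun r : ℝ =>
      ((Real.log (‖f ((r : ℂ) * Complex.exp (Complex.I * (φ : ℂ)))‖ ) / r : ℝ) : EReal))
    Filter.atTop

/-- `f` is holomorphic on `{|z| > R}` and of exponential type there. -/
def ExpTypeOutsideDisc (R : ℝ) (f : ℂ → ℂ) : Prop :=
  DifferentiableOn ℂ f {z : ℂ | R < ‖z‖} ∧
    ∃ σ > 0, ∃ R' ≥ R, ∀ z : ℂ, R' < ‖z‖ →
      ‖f z‖ < Real.exp (σ * ‖z‖)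

/-- **The indicator function of a function of exponential type holomorphic outside a disc
satisfies `h_f(φ) + h_f(π + φ) ≥ 0`** (the classical inequality for entire functions,
proved via Phragmén–Lindelöf, continues to hold in this setting). -/
theorem indicator_add_pi_nonneg
    (R : ℝ) (hR : 0 < R) (f : ℂ → ℂ)
    (hf : ExpTypeOutsideDisc R f)
    (hne : ∃ z : ℂ, R < ‖z‖ ∧ f z ≠ 0) :
    ∀ φ ∈ Set.Icc (0 : ℝ) Real.pi,
      0 ≤ indicatorFn f φ + indicatorFn f (Real.pi + φ) := by

  obtain ⟨hdiff, σ, hσ, R', hR'R, hgrow⟩ := hf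
  intro φ hφ
  by_contra hcon
  push_neg at hcon
  set s := max R R' with hs
  have hspos : 0 < s := lt_of_lt_of_le hR (le_max_left _ _)
  have hd : DifferentiableOn ℂ f {z : ℂ | s < Complex.abs z} :=
    hdiff.mono (fun z hz => lt_of_le_of_lt (le_max_left R R') hz)
  have hgrow' : ∀ z : ℂ, s < Complex.abs z →
      Complex.abs (f z) ≤ Real.exp (σ * Complex.abs z) :=
    fun z hz => (hgrow z (lt_of_le_of_lt (le_max_right R R') hz)).le
  -- ray points have absolute value r
  have hray : ∀ (ψ r : ℝ), 0 ≤ r →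
      Complex.abs ((r:ℂ) * Complex.exp (Complex.I * (ψ:ℂ))) = r := by
    intro ψ r hr
    rw [map_mul, Complex.abs_exp, Complex.abs_ofReal, _root_.abs_of_nonneg hr]
    simp [Complex.mul_re]
  -- the indicator is at most σ
  have hub : ∀ ψ : ℝ, indicatorFn f ψ ≤ (σ : EReal) := by
    intro ψ
    refine Filter.limsup_le_of_le (by isBoundedDefault) ?_
    filter_upwards [eventually_gt_atTop (max s 0)] with r hr
    have hrs : s < r := lt_of_le_of_lt (le_max_left _ _) hr
    have hrpos : 0 < r := lt_of_le_of_lt (le_max_right _ _) hr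
    have habs := hray ψ r hrpos.le
    have hlog : Real.log (Complex.abs (f ((r:ℂ) * Complex.exp (Complex.I * (ψ:ℂ))))) ≤ σ * r := by
      set p := Complex.abs (f ((r:ℂ) * Complex.exp (Complex.I * (ψ:ℂ)))) with hp
      rcases eq_or_lt_of_le (show (0:ℝ) ≤ p from Complex.abs.nonneg _) with h0 | h0
      · rw [← h0, Real.log_zero]; positivity
      · have hple : p ≤ Real.exp (σ * r) := by
          have := hgrow' ((r:ℂ) * Complex.exp (Complex.I * (ψ:ℂ))) (by rw [habs]; exact hrs)
          rwa [habs] at this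
        calc Real.log p ≤ Real.log (Real.exp (σ * r)) :=
              Real.log_le_log h0 hple
        _ = σ * r := Real.log_exp _
    have : Real.log (Complex.abs (f ((r:ℂ) * Complex.exp (Complex.I * (ψ:ℂ))))) / r ≤ σ := by
      rw [div_le_iff₀ hrpos]
      linarith [hlog]
    exact_mod_cast this
  -- extract real bounds A, B with A + B < 0
  obtain ⟨A, B, hA, hB, hAB⟩ : ∃ A B : ℝ, indicatorFn f φ < (A:EReal) ∧
      indicatorFn f (Real.pi + φ) < (B:EReal) ∧ A + B < 0 := by
    by_cases hb1 : indicatorFn f φ = ⊥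
    · refine ⟨-σ - 1, σ + 1/2, by rw [hb1]; exact EReal.bot_lt_coe _, ?_, by linarith⟩
      refine lt_of_le_of_lt (hub _) ?_
      exact_mod_cast (by linarith : σ < σ + 1/2)
    by_cases hb2 : indicatorFn f (Real.pi + φ) = ⊥
    · refine ⟨σ + 1/2, -σ - 1, ?_, by rw [hb2]; exact EReal.bot_lt_coe _, by linarith⟩
      refine lt_of_le_of_lt (hub _) ?_
      exact_mod_cast (by linarith : σ < σ + 1/2)
    have ht1 : indicatorFn f φ ≠ ⊤ :=
      ne_top_of_le_ne_top (EReal.coe_ne_top σ) (hub φ)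
    have ht2 : indicatorFn f (Real.pi + φ) ≠ ⊤ :=
      ne_top_of_le_ne_top (EReal.coe_ne_top σ) (hub (Real.pi + φ))
    set x := (indicatorFn f φ).toReal with hx'
    set y := (indicatorFn f (Real.pi + φ)).toReal with hy'
    have hx : indicatorFn f φ = (x : EReal) := (EReal.coe_toReal ht1 hb1).symm
    have hy : indicatorFn f (Real.pi + φ) = (y : EReal) := (EReal.coe_toReal ht2 hb2).symm
    have hxy : x + y < 0 := by
      have h1 := hcon
      rw [hx, hy, ← EReal.coe_add] at h1
      exact_mod_cast h1
    refine ⟨x - (x+y)/4, y - (x+y)/4, ?_, ?_, by linarith⟩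
    · rw [hx]; exact_mod_cast (by linarith : x < x - (x+y)/4)
    · rw [hy]; exact_mod_cast (by linarith : y < y - (x+y)/4)
  set c₀ := -(A + B) with hc₀
  have hc₀pos : 0 < c₀ := by rw [hc₀]; linarith
  -- eventual bounds along the two rays
  have hev1 : ∀ᶠ r : ℝ in atTop,
      ((Real.log (Complex.abs (f ((r : ℂ) * Complex.exp (Complex.I * (φ : ℂ))))) / r : ℝ) : EReal)
        < (A : EReal) :=
    Filter.eventually_lt_of_limsup_lt hA
  have hev2 : ∀ᶠ r : ℝ in atTop,
      ((Real.log (Complex.abs (f ((r : ℂ) * Complex.exp (Complex.I * ((Real.pi + φ : ℝ) : ℂ))))) / r : ℝ) : EReal)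
        < (B : EReal) :=
    Filter.eventually_lt_of_limsup_lt hB
  obtain ⟨r₀, hr₀⟩ := Filter.eventually_atTop.1
    (hev1.and (hev2.and (eventually_gt_atTop (max s 1))))
  -- the auxiliary even function F
  set E : ℂ := Complex.exp (Complex.I * (φ:ℂ)) with hE
  have hEabs : Complex.abs E = 1 := by
    rw [hE, Complex.abs_exp]
    simp [Complex.mul_re]
  have hEne : E ≠ 0 := by
    intro h
    rw [h, map_zero] at hEabs
    norm_num at hEabs
  set F : ℂ → ℂ := fun z => f (E * z) * f (-(E * z)) with hF
  have habsE : ∀ z : ℂ, Complex.abs (E * z) = Complex.abs z := by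
    intro z; rw [map_mul, hEabs, one_mul]
  have habsnE : ∀ z : ℂ, Complex.abs (-(E * z)) = Complex.abs z := by
    intro z; rw [map_neg_eq_map, habsE]
  have hFd : DifferentiableOn ℂ F {z : ℂ | s < Complex.abs z} := by
    apply DifferentiableOn.mul
    · apply DifferentiableOn.comp hd
      · exact ((differentiable_const E).mul differentiable_id).differentiableOn
      · intro z hz
        simpa only [mem_setOf_eq, habsE] using hz
    · apply DifferentiableOn.comp hd
      · exact (((differentiable_const E).mul differentiable_id).neg).differentiableOn
      · intro z hz
        simpa only [mem_setOf_eq, habsnE] using hz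
  have hFB : ∀ z : ℂ, s < Complex.abs z →
      Complex.abs (F z) ≤ Real.exp (2*σ * Complex.abs z) := by
    intro z hz
    have h1 : Complex.abs (f (E * z)) ≤ Real.exp (σ * Complex.abs z) := by
      have := hgrow' (E * z) (by rwa [habsE])
      rwa [habsE] at this
    have h2 : Complex.abs (f (-(E * z))) ≤ Real.exp (σ * Complex.abs z) := by
      have := hgrow' (-(E * z)) (by rwa [habsnE])
      rwa [habsnE] at this
    calc Complex.abs (F z) = Complex.abs (f (E * z)) * Complex.abs (f (-(E * z))) := by
          rw [hF]; exact map_mul Complex.abs _ _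
    _ ≤ Real.exp (σ * Complex.abs z) * Real.exp (σ * Complex.abs z) :=
          mul_le_mul h1 h2 (Complex.abs.nonneg _) (Real.exp_pos _).le
    _ = Real.exp (2*σ * Complex.abs z) := by rw [← Real.exp_add]; ring_nf
  have hFeven : ∀ z : ℂ, F (-z) = F z := by
    intro z
    rw [hF]
    simp only []
    rw [show E * -z = -(E * z) by ring, show -(-(E * z)) = E * z by ring, mul_comm]
  -- exponential decay of F on the positive real axis
  have hFdec : ∀ r : ℝ, r₀ ≤ r → 1 ≤ r → s < r →
      Complex.abs (F ((r:ℂ))) ≤ Real.exp (-c₀ * r) := by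
    intro r hrr₀ hr1 hrs
    have hrpos : (0:ℝ) < r := lt_of_lt_of_le one_pos hr1
    obtain ⟨hA', hB', _⟩ := hr₀ r hrr₀
    have hA'' : Real.log (Complex.abs (f ((r:ℂ) * Complex.exp (Complex.I * (φ:ℂ))))) < A * r := by
      have := (EReal.coe_lt_coe_iff).1 hA'
      rwa [div_lt_iff₀ hrpos] at this
    have hB'' : Real.log (Complex.abs (f ((r:ℂ) * Complex.exp (Complex.I * ((Real.pi + φ:ℝ):ℂ))))) < B * r := by
      have := (EReal.coe_lt_coe_iff).1 hB'
      rwa [div_lt_iff₀ hrpos] at this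
    have hpt1 : (r:ℂ) * Complex.exp (Complex.I * (φ:ℂ)) = E * (r:ℂ) := by
      rw [hE]; ring
    have hpt2 : (r:ℂ) * Complex.exp (Complex.I * ((Real.pi + φ:ℝ):ℂ)) = -(E * (r:ℂ)) := by
      rw [hE, Complex.ofReal_add, mul_add, Complex.exp_add,
        show Complex.I * (Real.pi:ℂ) = (Real.pi:ℂ) * Complex.I by ring, Complex.exp_pi_mul_I]
      ring
    rw [hpt1] at hA''
    rw [hpt2] at hB''
    set p := Complex.abs (f (E * (r:ℂ))) with hp
    set q := Complex.abs (f (-(E * (r:ℂ)))) with hq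
    have hFr : Complex.abs (F ((r:ℂ))) = p * q := by
      rw [hF]; exact map_mul Complex.abs _ _
    rw [hFr]
    rcases eq_or_lt_of_le (show (0:ℝ) ≤ p from Complex.abs.nonneg _) with h0 | h0
    · rw [← h0, zero_mul]; positivity
    rcases eq_or_lt_of_le (show (0:ℝ) ≤ q from Complex.abs.nonneg _) with h1 | h1
    · rw [← h1, mul_zero]; positivity
    have hple : p < Real.exp (A * r) := by
      rw [← Real.exp_log h0]
      exact Real.exp_lt_exp.2 hA''
    have hqle : q < Real.exp (B * r) := by
      rw [← Real.exp_log h1]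
      exact Real.exp_lt_exp.2 hB''
    calc p * q ≤ Real.exp (A * r) * Real.exp (B * r) :=
          mul_le_mul hple.le hqle.le h1.le (Real.exp_pos _).le
    _ = Real.exp ((A + B) * r) := by rw [← Real.exp_add]; ring_nf
    _ = Real.exp (-c₀ * r) := by rw [hc₀]; ring_nf
  -- iteration radius
  set r₁ := max (max r₀ 1) (s + 1) with hr₁def
  have hr₁s : s < r₁ := lt_of_lt_of_le (by linarith) (le_max_right (max r₀ 1) (s+1))
  have hr₁1 : (1:ℝ) ≤ r₁ := le_trans (le_max_right r₀ 1) (le_max_left _ _)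
  have hr₁r₀ : r₀ ≤ r₁ := le_trans (le_max_left r₀ 1) (le_max_left _ _)
  -- decay on the two horizontal rays, in sector format
  have hdec0 : ∀ C : ℝ, 1 ≤ C → ∀ r : ℝ, r₁ ≤ r →
      Complex.abs (F ((r:ℂ) * Complex.exp (((0:ℝ):ℂ) * Complex.I)))
        ≤ C * Real.exp (-c₀ * r) := by
    intro C hC r hr
    have hpt : ((r:ℂ) * Complex.exp (((0:ℝ):ℂ) * Complex.I)) = (r:ℂ) := by simp
    rw [hpt]
    calc Complex.abs (F ((r:ℂ)))
        ≤ Real.exp (-c₀ * r) :=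
          hFdec r (le_trans hr₁r₀ hr) (le_trans hr₁1 hr) (lt_of_lt_of_le hr₁s hr)
    _ = 1 * Real.exp (-c₀ * r) := (one_mul _).symm
    _ ≤ C * Real.exp (-c₀ * r) := mul_le_mul_of_nonneg_right hC (Real.exp_pos _).le
  have hdecπ : ∀ C : ℝ, 1 ≤ C → ∀ r : ℝ, r₁ ≤ r →
      Complex.abs (F ((r:ℂ) * Complex.exp (((Real.pi:ℝ):ℂ) * Complex.I)))
        ≤ C * Real.exp (-c₀ * r) := by
    intro C hC r hr
    have hpt : ((r:ℂ) * Complex.exp (((Real.pi:ℝ):ℂ) * Complex.I)) = -((r:ℂ)) := by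
      rw [Complex.exp_pi_mul_I]; ring
    rw [hpt, hFeven]
    calc Complex.abs (F ((r:ℂ)))
        ≤ Real.exp (-c₀ * r) :=
          hFdec r (le_trans hr₁r₀ hr) (le_trans hr₁1 hr) (lt_of_lt_of_le hr₁s hr)
    _ = 1 * Real.exp (-c₀ * r) := (one_mul _).symm
    _ ≤ C * Real.exp (-c₀ * r) := mul_le_mul_of_nonneg_right hC (Real.exp_pos _).le
  have hsqrt2 : Real.sqrt 2 * Real.sqrt 2 = 2 := Real.mul_self_sqrt (by norm_num)
  -- the key iteration
  have key : ∀ n : ℕ, ∃ C : ℝ, 1 ≤ C ∧ ∃ r₂ : ℝ, r₁ ≤ r₂ ∧ ∀ r : ℝ, r₂ ≤ r →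
      Complex.abs (F ((r:ℂ) * Complex.exp (((Real.pi/2:ℝ):ℂ) * Complex.I)))
        ≤ C * Real.exp ((2*σ - (n:ℝ) * c₀) * r) := by
    intro n
    induction n with
    | zero =>
      refine ⟨1, le_refl _, r₁, le_refl _, ?_⟩
      intro r hr
      have hrpos : (0:ℝ) ≤ r := by linarith [le_trans hr₁1 hr]
      have habs : Complex.abs ((r:ℂ) * Complex.exp (((Real.pi/2:ℝ):ℂ) * Complex.I)) = r := by
        rw [map_mul, abs_exp_real_mul_I, Complex.abs_ofReal, mul_one,
          _root_.abs_of_nonneg hrpos]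
      have h1 := hFB _ (by rw [habs]; exact lt_of_lt_of_le hr₁s hr)
      rw [habs] at h1
      rw [one_mul]
      calc Complex.abs (F ((r:ℂ) * Complex.exp (((Real.pi/2:ℝ):ℂ) * Complex.I)))
          ≤ Real.exp (2*σ*r) := h1
      _ = Real.exp ((2*σ - (0:ℕ) * c₀) * r) := by norm_num
    | succ n ih =>
      obtain ⟨C, hC1, r₂, hr₂, hmid⟩ := ih
      set sn := 2*σ - (n:ℝ) * c₀ with hsn
      set p := (sn - c₀) * (Real.sqrt 2 / 2) with hpdef
      have hr₂s : s < r₂ := lt_of_lt_of_le hr₁s hr₂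
      -- sector [0, π/2]
      obtain ⟨M₁, hM₁C, hM₁1, hsec1⟩ := sectorPL F s (2*σ) C (-c₀) sn 0 r₂ hspos.le hr₂s
        hFd hFB
        (fun r hr => hdec0 C hC1 r (le_trans hr₂ hr))
        (fun r hr => by
          rw [show (0:ℝ) + Real.pi/2 = Real.pi/2 by ring]
          exact hmid r hr)
      have heval1 : ∀ r : ℝ, r₂ ≤ r →
          Complex.abs (F ((r:ℂ) * Complex.exp (((Real.pi/4:ℝ):ℂ) * Complex.I)))
            ≤ M₁ * Real.exp (p * r) := by
        intro r hr
        have h := hsec1 (Real.pi/4) (by positivity) (by linarith [Real.pi_pos]) r hr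
        rw [sub_zero, Real.cos_pi_div_four, Real.sin_pi_div_four] at h
        have hexp : -c₀ * (Real.sqrt 2/2) + sn * (Real.sqrt 2/2) = p := by
          rw [hpdef]; ring
        rwa [hexp] at h
      -- sector [π/2, π]
      obtain ⟨M₂, hM₂C, hM₂1, hsec2⟩ := sectorPL F s (2*σ) C sn (-c₀) (Real.pi/2) r₂
        hspos.le hr₂s hFd hFB
        (fun r hr => hmid r hr)
        (fun r hr => by
          rw [show Real.pi/2 + Real.pi/2 = Real.pi by ring]
          exact hdecπ C hC1 r (le_trans hr₂ hr))
      have heval2 : ∀ r : ℝ, r₂ ≤ r →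
          Complex.abs (F ((r:ℂ) * Complex.exp (((3*Real.pi/4:ℝ):ℂ) * Complex.I)))
            ≤ M₂ * Real.exp (p * r) := by
        intro r hr
        have h := hsec2 (3*Real.pi/4) (by linarith [Real.pi_pos]) (by linarith [Real.pi_pos]) r hr
        rw [show 3*Real.pi/4 - Real.pi/2 = Real.pi/4 by ring,
          Real.cos_pi_div_four, Real.sin_pi_div_four] at h
        have hexp : sn * (Real.sqrt 2/2) + -c₀ * (Real.sqrt 2/2) = p := by
          rw [hpdef]; ring
        rwa [hexp] at h
      -- sector [π/4, 3π/4]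
      obtain ⟨M₃, hM₃C, hM₃1, hsec3⟩ := sectorPL F s (2*σ) (max M₁ M₂) p p (Real.pi/4) r₂
        hspos.le hr₂s hFd hFB
        (fun r hr => le_trans (heval1 r hr)
          (mul_le_mul_of_nonneg_right (le_max_left _ _) (Real.exp_pos _).le))
        (fun r hr => by
          rw [show Real.pi/4 + Real.pi/2 = 3*Real.pi/4 by ring]
          exact le_trans (heval2 r hr)
            (mul_le_mul_of_nonneg_right (le_max_right _ _) (Real.exp_pos _).le))
      refine ⟨M₃, hM₃1, r₂, hr₂, ?_⟩
      intro r hr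
      have h := hsec3 (Real.pi/2) (by linarith [Real.pi_pos]) (by linarith [Real.pi_pos]) r hr
      rw [show Real.pi/2 - Real.pi/4 = Real.pi/4 by ring,
        Real.cos_pi_div_four, Real.sin_pi_div_four] at h
      have hexp : p * (Real.sqrt 2/2) + p * (Real.sqrt 2/2) = 2*σ - ((n+1:ℕ):ℝ) * c₀ := by
        rw [hpdef, hsn]
        push_cast
        linear_combination ((2*σ - (n:ℝ)*c₀ - c₀)/2) * hsqrt2
      rwa [hexp] at h
  -- choose n with 2σ - n c₀ ≤ -c₀
  obtain ⟨n, hn⟩ := exists_nat_ge ((2*σ + c₀)/c₀)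
  have hsnle : 2*σ - (n:ℝ)*c₀ ≤ -c₀ := by
    rw [div_le_iff₀ hc₀pos] at hn
    linarith
  obtain ⟨C, hC1, r₂, hr₂, hmid⟩ := key n
  have hr₂s : s < r₂ := lt_of_lt_of_le hr₁s hr₂
  have hr₂pos : (0:ℝ) < r₂ := lt_of_le_of_lt hspos.le hr₂s
  have hmid' : ∀ r : ℝ, r₂ ≤ r →
      Complex.abs (F ((r:ℂ) * Complex.exp (((Real.pi/2:ℝ):ℂ) * Complex.I)))
        ≤ C * Real.exp (-c₀ * r) := by
    intro r hr
    have hrpos : (0:ℝ) ≤ r := le_trans hr₂pos.le hr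
    refine le_trans (hmid r hr) ?_
    apply mul_le_mul_of_nonneg_left ?_ (by linarith : (0:ℝ) ≤ C)
    exact Real.exp_le_exp.2 (mul_le_mul_of_nonneg_right hsnle hrpos)
  have hcs : ∀ θ : ℝ, 0 ≤ θ → θ ≤ Real.pi/2 →
      -c₀ * Real.cos θ + -c₀ * Real.sin θ ≤ -c₀ := by
    intro θ h0 h1
    have hc := Real.cos_nonneg_of_mem_Icc ⟨by linarith, h1⟩
    have hs' := Real.sin_nonneg_of_nonneg_of_le_pi h0 (by linarith [Real.pi_pos])
    have hpyth := Real.sin_sq_add_cos_sq θ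
    have h2 : 1 ≤ Real.cos θ + Real.sin θ := by nlinarith
    nlinarith
  obtain ⟨M₄, hM₄C, hM₄1, hsec4⟩ := sectorPL F s (2*σ) C (-c₀) (-c₀) 0 r₂
    hspos.le hr₂s hFd hFB
    (fun r hr => hdec0 C hC1 r (le_trans hr₂ hr))
    (fun r hr => by
      rw [show (0:ℝ) + Real.pi/2 = Real.pi/2 by ring]
      exact hmid' r hr)
  obtain ⟨M₅, hM₅C, hM₅1, hsec5⟩ := sectorPL F s (2*σ) C (-c₀) (-c₀) (Real.pi/2) r₂
    hspos.le hr₂s hFd hFB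
    (fun r hr => hmid' r hr)
    (fun r hr => by
      rw [show Real.pi/2 + Real.pi/2 = Real.pi by ring]
      exact hdecπ C hC1 r (le_trans hr₂ hr))
  set M₆ := max M₄ M₅ with hM₆
  have hupper : ∀ θ : ℝ, 0 ≤ θ → θ ≤ Real.pi → ∀ r : ℝ, r₂ ≤ r →
      Complex.abs (F ((r:ℂ) * Complex.exp ((θ:ℂ) * Complex.I)))
        ≤ M₆ * Real.exp (-(c₀ * r)) := by
    intro θ h0 h1 r hr
    have hrpos : (0:ℝ) ≤ r := le_trans hr₂pos.le hr
    rcases le_total θ (Real.pi/2) with h | h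
    · have h3 := hsec4 θ h0 (by linarith) r hr
      rw [sub_zero] at h3
      have h4 : M₄ * Real.exp ((-c₀ * Real.cos θ + -c₀ * Real.sin θ) * r)
          ≤ M₄ * Real.exp (-(c₀ * r)) := by
        apply mul_le_mul_of_nonneg_left ?_ (by linarith : (0:ℝ) ≤ M₄)
        apply Real.exp_le_exp.2
        calc (-c₀ * Real.cos θ + -c₀ * Real.sin θ) * r ≤ -c₀ * r :=
              mul_le_mul_of_nonneg_right (hcs θ h0 h) hrpos
        _ = -(c₀ * r) := by ring
      have h5 : M₄ * Real.exp (-(c₀ * r)) ≤ M₆ * Real.exp (-(c₀ * r)) :=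
        mul_le_mul_of_nonneg_right (le_max_left M₄ M₅) (Real.exp_pos _).le
      exact le_trans h3 (le_trans h4 h5)
    · have h3 := hsec5 θ h (by linarith) r hr
      have h4 : M₅ * Real.exp ((-c₀ * Real.cos (θ - Real.pi/2) + -c₀ * Real.sin (θ - Real.pi/2)) * r)
          ≤ M₅ * Real.exp (-(c₀ * r)) := by
        apply mul_le_mul_of_nonneg_left ?_ (by linarith : (0:ℝ) ≤ M₅)
        apply Real.exp_le_exp.2
        calc (-c₀ * Real.cos (θ - Real.pi/2) + -c₀ * Real.sin (θ - Real.pi/2)) * r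
            ≤ -c₀ * r :=
              mul_le_mul_of_nonneg_right (hcs (θ - Real.pi/2) (by linarith) (by linarith)) hrpos
        _ = -(c₀ * r) := by ring
      have h5 : M₅ * Real.exp (-(c₀ * r)) ≤ M₆ * Real.exp (-(c₀ * r)) :=
        mul_le_mul_of_nonneg_right (le_max_right M₄ M₅) (Real.exp_pos _).le
      exact le_trans h3 (le_trans h4 h5)
  have hAllUp : ∀ z : ℂ, r₂ ≤ Complex.abs z → 0 ≤ z.im →
      Complex.abs (F z) ≤ M₆ * Real.exp (-(c₀ * Complex.abs z)) := by
    intro z hz him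
    have h0 : 0 ≤ Complex.arg z := Complex.arg_nonneg_iff.2 him
    have h1 : Complex.arg z ≤ Real.pi := Complex.arg_le_pi z
    have hpt := Complex.abs_mul_exp_arg_mul_I z
    have h3 := hupper (Complex.arg z) h0 h1 (Complex.abs z) hz
    rwa [hpt] at h3
  have hAll : ∀ z : ℂ, r₂ ≤ Complex.abs z →
      Complex.abs (F z) ≤ M₆ * Real.exp (-(c₀ * Complex.abs z)) := by
    intro z hz
    rcases le_or_gt 0 z.im with him | him
    · exact hAllUp z hz him
    · have h2 := hAllUp (-z) (by rwa [map_neg_eq_map]) (by simp; linarith)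
      rwa [hFeven, map_neg_eq_map] at h2
  obtain ⟨ρ, hρpos, hFzero⟩ := vanishPL F s M₆ c₀ r₂ hspos hc₀pos hr₂s hFd hAll
  have hprod : ∀ u : ℂ, max ρ R < Complex.abs u → f u * f (-u) = 0 := by
    intro u hu
    have habs : Complex.abs (E⁻¹ * u) = Complex.abs u := by
      rw [map_mul, map_inv₀, hEabs]
      simp
    have h3 := hFzero (E⁻¹ * u) (by rw [habs]; exact lt_of_le_of_lt (le_max_left _ _) hu)
    rw [hF] at h3
    simp only [] at h3
    rwa [show E * (E⁻¹ * u) = u by field_simp] at h3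
  obtain ⟨z₁, hz₁, hfz₁⟩ := hne
  exact product_zero_contra R hR f hdiff (max ρ R) (le_max_right _ _) hprod z₁ hz₁ hfz₁
end
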